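/- Let μ be a probability measure on ℝ that is symmetric (invariant under x ↦ −x) and let r ∈ (1,2] with m_r = ∫|x|^r dμ(x) < ∞. If (Σ_{j=1}^p b_j)^r + (Σ_{j=1}^p a_j^{r/2})·m_r < 1, then there exist weights γ ∈ (0,∞)^p, ρ ∈ (0,1) and C ≥ 0 such that for every y ∈ ℝ^p and each i ∈ {1,2}: ∫ V_{γ,r}(N_i(y,x)) dμ(x) ≤ ρ·V_{γ,r}(y) + C. -/

import Mathlib

open MeasureTheory

/-- The next lag-vector of the BDAR recursion: first coordinate
`φ₀ + ∑ⱼ φⱼ yⱼ + x √(α₀ + ∑ⱼ αⱼ yⱼ²)`, remaining coordinates shifted from `y`. -/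
noncomputable def nextLag (p : ℕ) (φ0 : ℝ) (φ : Fin p → ℝ) (α0 : ℝ) (α : Fin p → ℝ)
    (y : Fin p → ℝ) (x : ℝ) : Fin p → ℝ :=
  fun k =>
    if _ : (k : ℕ) = 0 then
      φ0 + (∑ j, φ j * y j) + x * Real.sqrt (α0 + ∑ j, α j * y j ^ 2)
    else y ⟨(k : ℕ) - 1, by have := k.isLt; omega⟩

/-- The drift test function `V_{γ,r}(y) = 1 + ∑ₖ γₖ |yₖ|^r`. -/
noncomputable def testV (p : ℕ) (γ : Fin p → ℝ) (r : ℝ) (y : Fin p → ℝ) : ℝ :=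
  1 + ∑ k, γ k * |y k| ^ r


open MeasureTheory Finset

lemma aux_rpow_subadd {s : ℝ} (hs0 : 0 < s) (hs1 : s ≤ 1) {u v : ℝ} (hu : 0 ≤ u) (hv : 0 ≤ v) :
    (u + v) ^ s ≤ u ^ s + v ^ s := by
  have h := NNReal.rpow_add_le_add_rpow (u.toNNReal) (v.toNNReal) hs0.le hs1
  have h2 : ((u.toNNReal + v.toNNReal : NNReal) : ℝ) ^ s ≤ ((u.toNNReal ^ s + v.toNNReal ^ s : NNReal) : ℝ) := by
    rw [← NNReal.coe_rpow]
    exact_mod_cast NNReal.coe_le_coe.mpr h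
  simpa [NNReal.coe_rpow, Real.coe_toNNReal u hu, Real.coe_toNNReal v hv] using h2

lemma aux_concave2 {s : ℝ} (hs0 : 0 < s) (hs1 : s ≤ 1) {u v : ℝ} (hu : 0 ≤ u) (hv : 0 ≤ v) :
    u ^ s + v ^ s ≤ 2 * ((u + v) / 2) ^ s := by
  have hp : (1 : ℝ) ≤ 1 / s := one_le_one_div hs0 hs1
  have h := Real.arith_mean_le_rpow_mean (Finset.univ : Finset (Fin 2))
      (fun _ => (1:ℝ)/2) (fun j => if j = 0 then u ^ s else v ^ s)
      (fun i _ => by norm_num) (by norm_num [Fin.sum_univ_two])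
      (fun i _ => by by_cases h : i = 0 <;> simp [h, Real.rpow_nonneg hu, Real.rpow_nonneg hv]) hp
  rw [Fin.sum_univ_two, Fin.sum_univ_two] at h
  have hus : (u ^ s) ^ ((1:ℝ)/s) = u := by
    rw [← Real.rpow_mul hu, mul_one_div, div_self hs0.ne', Real.rpow_one]
  have hvs : (v ^ s) ^ ((1:ℝ)/s) = v := by
    rw [← Real.rpow_mul hv, mul_one_div, div_self hs0.ne', Real.rpow_one]
  simp only [if_pos rfl, if_neg (by decide : (1 : Fin 2) ≠ 0), if_true, hus, hvs,
    one_div_one_div] at h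
  have he : (1:ℝ)/2 * u + 1/2 * v = (u + v) / 2 := by ring
  rw [he] at h
  linarith

lemma aux_clarkson {r : ℝ} (hr1 : 1 ≤ r) (hr2 : r ≤ 2) (a x : ℝ) :
    |a + x| ^ r + |a - x| ^ r ≤ 2 * (|a| ^ r + |x| ^ r) := by
  set s := r / 2 with hs
  have hs0 : 0 < s := by positivity
  have hs1 : s ≤ 1 := by simp [hs]; linarith
  have key : ∀ t : ℝ, |t| ^ r = (t ^ 2) ^ s := by
    intro t
    rw [← sq_abs t, ← Real.rpow_natCast_mul (abs_nonneg t) 2 s]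
    congr 1
    push_cast [hs]
    ring
  rw [key (a+x), key (a-x), key a, key x]
  have h1 : ((a+x)^2) ^ s + ((a-x)^2) ^ s ≤ 2 * (((a+x)^2 + (a-x)^2)/2) ^ s :=
    aux_concave2 hs0 hs1 (sq_nonneg _) (sq_nonneg _)
  have he : ((a+x)^2 + (a-x)^2)/2 = a^2 + x^2 := by ring
  rw [he] at h1
  refine h1.trans ?_
  have h2 : (a^2 + x^2) ^ s ≤ (a^2) ^ s + (x^2) ^ s :=
    aux_rpow_subadd hs0 hs1 (sq_nonneg _) (sq_nonneg _)
  linarith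

lemma aux_rpow_sum_le {ι : Type*} (t : Finset ι) {s : ℝ} (hs0 : 0 < s) (hs1 : s ≤ 1)
    (f : ι → ℝ) (hf : ∀ j ∈ t, 0 ≤ f j) :
    (∑ j ∈ t, f j) ^ s ≤ ∑ j ∈ t, f j ^ s := by
  induction t using Finset.cons_induction with
  | empty => simp [Real.zero_rpow hs0.ne']
  | cons a t ha ih =>
    rw [Finset.sum_cons, Finset.sum_cons]
    have h1 : (f a + ∑ j ∈ t, f j) ^ s ≤ f a ^ s + (∑ j ∈ t, f j) ^ s :=
      aux_rpow_subadd hs0 hs1 (hf a (Finset.mem_cons_self a t))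
        (Finset.sum_nonneg fun j hj => hf j (Finset.mem_cons_of_mem hj))
    exact h1.trans (add_le_add_right (ih fun j hj => hf j (Finset.mem_cons_of_mem hj)) _)

lemma aux_jensen {n : ℕ} (c t : Fin n → ℝ) (hc : ∀ j, 0 ≤ c j) (ht : ∀ j, 0 ≤ t j)
    {r : ℝ} (hr : 1 ≤ r) :
    (∑ j, c j * t j) ^ r ≤ (∑ j, c j) ^ (r - 1) * ∑ j, c j * t j ^ r := by
  set S := ∑ j, c j with hS
  rcases eq_or_lt_of_le (Finset.sum_nonneg fun j _ => hc j : (0:ℝ) ≤ S) with h0 | hSpos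
  · have hz : ∀ j, c j = 0 := by
      intro j
      have := (Finset.sum_eq_zero_iff_of_nonneg (fun j _ => hc j)).mp h0.symm
      exact this j (Finset.mem_univ j)
    simp [hz, Real.zero_rpow (by linarith : r ≠ 0)]
  · have hw : ∑ j, c j / S = 1 := by
      rw [← Finset.sum_div, ← hS, div_self hSpos.ne']
    have h := Real.rpow_arith_mean_le_arith_mean_rpow Finset.univ (fun j => c j / S) t
      (fun j _ => div_nonneg (hc j) hSpos.le) hw (fun j _ => ht j) hr
    have hL : (∑ j, c j / S * t j) = (∑ j, c j * t j) / S := by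
      rw [Finset.sum_div]; exact Finset.sum_congr rfl fun j _ => by ring
    have hR : (∑ j, c j / S * t j ^ r) = (∑ j, c j * t j ^ r) / S := by
      rw [Finset.sum_div]; exact Finset.sum_congr rfl fun j _ => by ring
    rw [hL, hR, Real.div_rpow (Finset.sum_nonneg fun j _ => mul_nonneg (hc j) (ht j)) hSpos.le] at h
    have hmul := mul_le_mul_of_nonneg_left h (Real.rpow_nonneg hSpos.le r)
    rw [mul_div_cancel₀ _ (by positivity : S ^ r ≠ 0)] at hmul
    refine hmul.trans (le_of_eq ?_)
    have hS' : (0:ℝ) < S := hSpos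
    rw [Real.rpow_sub hS', Real.rpow_one]
    ring

lemma aux_split {r : ℝ} (hr0 : 0 ≤ r) {ε A B : ℝ} (hε : 0 < ε) (hA : 0 ≤ A) (hB : 0 ≤ B) :
    (A + B) ^ r ≤ ((1 + ε) * B) ^ r + ((1 + 1/ε) * A) ^ r := by
  rcases le_total A (ε * B) with h | h
  · have h1 : A + B ≤ (1 + ε) * B := by nlinarith
    have := Real.rpow_le_rpow (by linarith) h1 hr0
    have h2 : 0 ≤ ((1 + 1/ε) * A) ^ r := Real.rpow_nonneg (by positivity) r
    linarith
  · have h1 : A + B ≤ (1 + 1/ε) * A := by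
      have : B ≤ A / ε := (le_div_iff₀ hε).mpr (by linarith [mul_comm ε B])
      have he : (1 + 1/ε) * A = A + A / ε := by field_simp
      linarith
    have := Real.rpow_le_rpow (by linarith) h1 hr0
    have h2 : 0 ≤ ((1 + ε) * B) ^ r := Real.rpow_nonneg (by positivity) r
    linarith

lemma aux_integral_bound (μ : Measure ℝ) [IsProbabilityMeasure μ]
    (hsym : μ.map (fun x => -x) = μ) {r : ℝ} (hr1 : 1 ≤ r) (hr2 : r ≤ 2)
    (hmr : Integrable (fun x => |x| ^ r) μ) (m σ : ℝ) (hσ : 0 ≤ σ) :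
    Integrable (fun x => |m + x * σ| ^ r) μ ∧
      ∫ x, |m + x * σ| ^ r ∂μ ≤ |m| ^ r + σ ^ r * ∫ x, |x| ^ r ∂μ := by
  have hr0 : (0:ℝ) ≤ r := by linarith
  have hbound : ∀ x : ℝ, |m + x * σ| ^ r + |m - x * σ| ^ r
      ≤ 2 * (|m| ^ r + σ ^ r * |x| ^ r) := by
    intro x
    have h2 := aux_clarkson hr1 hr2 m (x * σ)
    have hxσ : |x * σ| ^ r = σ ^ r * |x| ^ r := by
      rw [abs_mul, abs_of_nonneg hσ, Real.mul_rpow (abs_nonneg x) hσ]; ring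
    rw [hxσ] at h2; linarith
  have hcont : ∀ c : ℝ, Continuous fun x : ℝ => |m + x * c| ^ r :=
    fun c => ((continuous_const.add (continuous_id.mul continuous_const)).abs).rpow_const
      (fun x => Or.inr hr0)
  have hint : ∀ c : ℝ, Integrable (fun x => |m + x * c| ^ r) μ := by
    intro c
    refine Integrable.mono'
      (((integrable_const (|m| ^ r)).add (hmr.const_mul (|c| ^ r))).const_mul 2)
      ((hcont c).aestronglyMeasurable) (Filter.Eventually.of_forall fun x => ?_)
    have h2 := aux_clarkson hr1 hr2 m (x * c)
    have h3 : (0:ℝ) ≤ |m - x * c| ^ r := Real.rpow_nonneg (abs_nonneg _) r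
    have hxc : |x * c| ^ r = |c| ^ r * |x| ^ r := by
      rw [abs_mul, mul_comm, Real.mul_rpow (abs_nonneg c) (abs_nonneg x)]
    rw [Real.norm_of_nonneg (Real.rpow_nonneg (abs_nonneg _) r)]
    rw [hxc] at h2
    simp only [Pi.add_apply]
    linarith
  have hintp := hint σ
  have hintm : Integrable (fun x => |m - x * σ| ^ r) μ := by
    have := hint (-σ)
    simpa [mul_neg, ← sub_eq_add_neg] using this
  have hmap : ∫ x, |m + x * σ| ^ r ∂μ = ∫ x, |m - x * σ| ^ r ∂μ := by
    have h0 : ∫ x, |m + x * σ| ^ r ∂μ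
        = ∫ x, |m + x * σ| ^ r ∂(μ.map (fun x => -x)) := by rw [hsym]
    rw [h0, integral_map measurable_neg.aemeasurable
      (by rw [hsym]; exact (hcont σ).aestronglyMeasurable)]
    congr 1; funext x; rw [neg_mul, ← sub_eq_add_neg]
  have hsum : ∫ x, (|m + x * σ| ^ r + |m - x * σ| ^ r) ∂μ
      ≤ ∫ x, 2 * (|m| ^ r + σ ^ r * |x| ^ r) ∂μ :=
    integral_mono (hintp.add hintm)
      (((integrable_const _).add (hmr.const_mul _)).const_mul 2) hbound
  rw [integral_add hintp hintm, ← hmap] at hsum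
  have hrhs : ∫ x, 2 * (|m| ^ r + σ ^ r * |x| ^ r) ∂μ
      = 2 * (|m| ^ r + σ ^ r * ∫ x, |x| ^ r ∂μ) := by
    rw [integral_const_mul, integral_add (integrable_const _) (hmr.const_mul _),
      integral_const, integral_const_mul]
    simp [measure_univ]
  rw [hrhs] at hsum
  exact ⟨hintp, by linarith⟩

section MainProof
open Finset

set_option maxHeartbeats 2000000 in
/-- Drift condition for the BDAR model, case `r ∈ (1,2]` with symmetric innovations: if
`(∑ⱼ bⱼ)^r + (∑ⱼ aⱼ^{r/2}) m_r < 1` then there are weights `γ`, `ρ ∈ (0,1)` and `C ≥ 0` with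
`∫ V_{γ,r}(N_i(y,x)) dμ(x) ≤ ρ V_{γ,r}(y) + C` for all `y` and both regimes. -/
theorem bdar_drift_condition_mid_r (p : ℕ) (hp : 1 ≤ p)
    (φ0 : Fin 2 → ℝ) (φ : Fin 2 → Fin p → ℝ)
    (α0 : Fin 2 → ℝ) (α : Fin 2 → Fin p → ℝ)
    (hα0 : ∀ i, 0 < α0 i) (hα : ∀ i j, 0 ≤ α i j)
    (μ : Measure ℝ) [IsProbabilityMeasure μ]
    (hsym : μ.map (fun x => -x) = μ)
    (r : ℝ) (hr : r ∈ Set.Ioc (1 : ℝ) 2)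
    (hmr : Integrable (fun x => |x| ^ r) μ)
    (hcond : (∑ j, max |φ 0 j| |φ 1 j|) ^ r
        + (∑ j, (max (α 0 j) (α 1 j)) ^ (r / 2)) * (∫ x, |x| ^ r ∂μ) < 1) :
    ∃ γ : Fin p → ℝ, (∀ k, 0 < γ k) ∧
      ∃ ρ : ℝ, ρ ∈ Set.Ioo (0 : ℝ) 1 ∧ ∃ C : ℝ, 0 ≤ C ∧
        ∀ y : Fin p → ℝ, ∀ i : Fin 2,
          ∫ x, testV p γ r (nextLag p (φ0 i) (φ i) (α0 i) (α i) y x) ∂μ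
            ≤ ρ * testV p γ r y + C := by
  obtain ⟨hr1, hr2⟩ := hr
  have hr0 : (0:ℝ) ≤ r := by linarith
  have hs0 : (0:ℝ) < r / 2 := by linarith
  have hs1 : r / 2 ≤ 1 := by linarith
  obtain ⟨q, rfl⟩ : ∃ q, p = q + 1 := ⟨p - 1, by omega⟩
  -- basic quantities
  set mR := ∫ x, |x| ^ r ∂μ with hmRdef
  have hmR0 : 0 ≤ mR := integral_nonneg fun x => Real.rpow_nonneg (abs_nonneg x) r
  set bb : Fin (q+1) → ℝ := fun j => max |φ 0 j| |φ 1 j| with hbbdef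
  set aa : Fin (q+1) → ℝ := fun j => max (α 0 j) (α 1 j) with haadef
  have hbb0 : ∀ j, 0 ≤ bb j := fun j => le_trans (abs_nonneg _) (le_max_left _ _)
  have haa0 : ∀ j, 0 ≤ aa j := fun j => le_trans (hα 0 j) (le_max_left _ _)
  set Sb := ∑ j, bb j with hSbdef
  set Sa := ∑ j, (aa j) ^ (r/2) with hSadef
  have hSb0 : 0 ≤ Sb := Finset.sum_nonneg fun j _ => hbb0 j
  have hSa0 : 0 ≤ Sa := Finset.sum_nonneg fun j _ => Real.rpow_nonneg (haa0 j) _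
  set E := Sb ^ r with hEdef
  have hE0 : 0 ≤ E := Real.rpow_nonneg hSb0 r
  have hcond' : E + Sa * mR < 1 := hcond
  -- choose ε
  set δ := (1 - (E + Sa * mR)) / 2 with hδdef
  have hδ : 0 < δ := by rw [hδdef]; linarith
  set ε := min 1 (δ / (3 * (E + 1))) with hεdef
  have hε0 : 0 < ε := lt_min one_pos (by positivity)
  have hε1 : ε ≤ 1 := min_le_left _ _
  have hε2 : ε * (3 * (E + 1)) ≤ δ := by
    rw [← le_div_iff₀ (by positivity)]
    exact min_le_right _ _
  have hop : (1:ℝ) ≤ 1 + ε := by linarith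
  have h1εr : (1 + ε) ^ r ≤ (1 + ε) ^ 2 := by
    have h := Real.rpow_le_rpow_of_exponent_le hop hr2
    rwa [Real.rpow_two] at h
  set lam := (1 + ε) ^ r * E + Sa * mR with hlamdef
  have hlam0 : 0 ≤ lam :=
    add_nonneg (mul_nonneg (Real.rpow_nonneg (by linarith) r) hE0) (mul_nonneg hSa0 hmR0)
  have hlam1 : lam ≤ 1 - δ := by
    have k1 : (1 + ε) ^ r * E ≤ (1 + ε) ^ 2 * E := mul_le_mul_of_nonneg_right h1εr hE0
    have k2 : (1 + ε) ^ 2 * E = E + (2 * ε + ε ^ 2) * E := by ring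
    have k3 : (2 * ε + ε ^ 2) * E ≤ 3 * ε * E := by
      have hh : 0 ≤ (ε * (1 - ε)) * E :=
        mul_nonneg (mul_nonneg hε0.le (by linarith)) hE0
      nlinarith [hh]
    have k4 : 3 * ε * E ≤ ε * (3 * (E + 1)) := by
      have := mul_nonneg hε0.le hE0
      nlinarith [hε0.le]
    rw [hlamdef, hδdef]
    rw [hδdef] at hε2
    linarith
  have hlam1' : lam < 1 := by linarith
  -- choose ρ
  set t := (1 + lam) / 2 with htdef
  have ht0 : 0 < t := by rw [htdef]; linarith
  have htl : lam < t := by rw [htdef]; linarith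
  have ht1 : t < 1 := by rw [htdef]; linarith
  set ρ := t ^ (((q:ℝ) + 1)⁻¹) with hρdef
  have hρ0 : 0 < ρ := Real.rpow_pos_of_pos ht0 _
  have hρ1 : ρ < 1 := Real.rpow_lt_one ht0.le ht1 (by positivity)
  have hρpow : ∀ j : ℕ, j ≤ q + 1 → t ≤ ρ ^ j := by
    intro j hj
    have h1 : (ρ:ℝ) ^ j = t ^ (((q:ℝ) + 1)⁻¹ * j) := by
      rw [hρdef, ← Real.rpow_natCast (t ^ (((q:ℝ) + 1)⁻¹)) j, ← Real.rpow_mul ht0.le]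
    have hjq : (j:ℝ) ≤ (q:ℝ) + 1 := by exact_mod_cast hj
    have h2 : ((q:ℝ) + 1)⁻¹ * j ≤ 1 := by
      have h3 : ((q:ℝ) + 1)⁻¹ * j ≤ ((q:ℝ) + 1)⁻¹ * ((q:ℝ) + 1) :=
        mul_le_mul_of_nonneg_left hjq (by positivity)
      rwa [inv_mul_cancel₀ (by positivity : ((q:ℝ) + 1) ≠ 0)] at h3
    rw [h1]
    calc t = t ^ (1:ℝ) := (Real.rpow_one t).symm
    _ ≤ t ^ (((q:ℝ) + 1)⁻¹ * j) := Real.rpow_le_rpow_of_exponent_ge ht0 ht1.le h2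
  -- the per-coordinate drift coefficients
  set dd : Fin (q+1) → ℝ :=
    fun j => (1 + ε) ^ r * Sb ^ (r - 1) * bb j + (aa j) ^ (r/2) * mR with hdddef
  have hdd0 : ∀ j, 0 ≤ dd j := by
    intro j
    exact add_nonneg
      (mul_nonneg (mul_nonneg (Real.rpow_nonneg (by linarith) r) (Real.rpow_nonneg hSb0 _))
        (hbb0 j)) (mul_nonneg (Real.rpow_nonneg (haa0 j) _) hmR0)
  set d : ℕ → ℝ := fun n => if h : n < q + 1 then dd ⟨n, h⟩ else 0 with hddef
  have hd0 : ∀ n, 0 ≤ d n := by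
    intro n
    rw [hddef]
    dsimp only
    split
    · exact hdd0 _
    · exact le_rfl
  have hd_eq : ∀ j : Fin (q+1), d j.1 = dd j := by
    intro j
    rw [hddef]
    dsimp only
    rw [dif_pos j.isLt]
  set γ' : ℕ → ℝ := fun n => Nat.rec (motive := fun _ => ℝ) 1 (fun j g => ρ * g - d j) n
    with hγ'def
  have hγ'0 : γ' 0 = 1 := rfl
  have hγ'succ : ∀ j, γ' (j+1) = ρ * γ' j - d j := fun j => rfl
  clear_value mR bb aa Sb Sa E δ ε lam t ρ dd d γ'
  have hdsum_full : ∑ n ∈ Finset.range (q+1), d n ≤ lam := by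
    have h1 : ∑ n ∈ Finset.range (q+1), d n = ∑ j : Fin (q+1), dd j := by
      rw [← Fin.sum_univ_eq_sum_range]
      exact Finset.sum_congr rfl fun j _ => hd_eq j
    have h2 : ∑ j : Fin (q+1), dd j
        = (1 + ε) ^ r * Sb ^ (r - 1) * Sb + Sa * mR := by
      rw [hdddef]
      rw [Finset.sum_add_distrib, ← Finset.mul_sum, ← Finset.sum_mul, ← hSbdef, ← hSadef]
    have h3 : Sb ^ (r - 1) * Sb ≤ Sb ^ r := by
      rcases eq_or_lt_of_le hSb0 with h | h
      · rw [← h, Real.zero_rpow (by linarith : r ≠ 0)]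
        simp
      · exact le_of_eq (by rw [← Real.rpow_add_one h.ne' (r-1), sub_add_cancel])
    have h4 : (1 + ε) ^ r * (Sb ^ (r - 1) * Sb) ≤ (1 + ε) ^ r * E := by
      rw [hEdef]
      exact mul_le_mul_of_nonneg_left h3 (Real.rpow_nonneg (by linarith) r)
    rw [h1, h2, hlamdef]
    rw [← mul_assoc] at h4
    exact add_le_add_left h4 _
  have hdsum : ∀ n, n ≤ q + 1 → ∑ i ∈ Finset.range n, d i ≤ lam := by
    intro n hn
    refine le_trans ?_ hdsum_full
    exact Finset.sum_le_sum_of_subset_of_nonneg (Finset.range_subset_range.mpr hn)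
      (fun i _ _ => hd0 i)
  -- the weights
  have hγ'lb : ∀ j, j ≤ q + 1 → ρ ^ j - (∑ i ∈ Finset.range j, d i) ≤ γ' j := by
    intro j
    induction j with
    | zero => intro _; simp [hγ'0]
    | succ j ih =>
      intro hj
      have h1 := ih (by omega)
      rw [hγ'succ, Finset.sum_range_succ, pow_succ]
      have h2 : ρ * (ρ ^ j - ∑ i ∈ Finset.range j, d i) ≤ ρ * γ' j :=
        mul_le_mul_of_nonneg_left h1 hρ0.le
      have hsnn : 0 ≤ ∑ i ∈ Finset.range j, d i := Finset.sum_nonneg fun i _ => hd0 i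
      have h3 : ρ * ∑ i ∈ Finset.range j, d i ≤ ∑ i ∈ Finset.range j, d i := by
        have hh : 0 ≤ (1 - ρ) * ∑ i ∈ Finset.range j, d i :=
          mul_nonneg (by linarith) hsnn
        nlinarith [hh]
      have he : ρ ^ j * ρ = ρ * ρ ^ j := by ring
      rw [he]
      linarith
  have hγ'pos : ∀ j, j ≤ q + 1 → t - lam ≤ γ' j := by
    intro j hj
    have h1 := hγ'lb j hj
    have h2 := hρpow j hj
    have h3 := hdsum j hj
    linarith
  have hg0 : 0 < t - lam := by linarith
  -- constants
  set A0 := max |φ0 0| |φ0 1| with hA0def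
  have hA00 : 0 ≤ A0 := le_trans (abs_nonneg _) (le_max_left _ _)
  set B0 := max (α0 0) (α0 1) with hB0def
  have hB00 : 0 ≤ B0 := le_trans (hα0 0).le (le_max_left _ _)
  set C0 := ((1 + 1/ε) * A0) ^ r + B0 ^ (r/2) * mR with hC0def
  have hC00 : 0 ≤ C0 :=
    add_nonneg (Real.rpow_nonneg (by positivity) r)
      (mul_nonneg (Real.rpow_nonneg hB00 _) hmR0)
  clear_value A0 B0 C0
  refine ⟨fun k => γ' k.1, ?_, ρ, ⟨hρ0, hρ1⟩, 1 + C0, by linarith, ?_⟩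
  · intro k
    exact lt_of_lt_of_le hg0 (hγ'pos k.1 (by omega))
  intro y i
  -- per-regime bounds on the coefficients
  have hφ0i : |φ0 i| ≤ A0 := by
    rw [hA0def]
    fin_cases i
    · exact le_max_left _ _
    · exact le_max_right _ _
  have hφi : ∀ j, |φ i j| ≤ bb j := by
    intro j
    rw [hbbdef]
    fin_cases i
    · exact le_max_left _ _
    · exact le_max_right _ _
  have hα0i : α0 i ≤ B0 := by
    rw [hB0def]
    fin_cases i
    · exact le_max_left _ _
    · exact le_max_right _ _
  have hαi : ∀ j, α i j ≤ aa j := by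
    intro j
    rw [haadef]
    fin_cases i
    · exact le_max_left _ _
    · exact le_max_right _ _
  set m := φ0 i + ∑ j, φ i j * y j with hmdef
  set u := α0 i + ∑ j, α i j * y j ^ 2 with hudef
  have hu0 : 0 ≤ u := by
    rw [hudef]
    have := (hα0 i).le
    have hsum : 0 ≤ ∑ j, α i j * y j ^ 2 :=
      Finset.sum_nonneg fun j _ => mul_nonneg (hα i j) (sq_nonneg _)
    linarith
  set σ := Real.sqrt u with hσdef
  have hσ0 : 0 ≤ σ := by rw [hσdef]; exact Real.sqrt_nonneg _
  clear_value m u σ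
  obtain ⟨hintZ, hI⟩ := aux_integral_bound μ hsym hr1.le hr2 hmr m σ hσ0
  rw [← hmRdef] at hI
  -- the integral of testV along the recursion
  have hfun : ∀ x, testV (q+1) (fun k => γ' k.1) r
      (nextLag (q+1) (φ0 i) (φ i) (α0 i) (α i) y x)
      = (1 + ∑ k : Fin q, γ' (k.1 + 1) * |y k.castSucc| ^ r) + γ' 0 * |m + x * σ| ^ r := by
    intro x
    rw [testV, Fin.sum_univ_succ]
    have hN0 : nextLag (q+1) (φ0 i) (φ i) (α0 i) (α i) y x 0 = m + x * σ := by
      rw [nextLag]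
      rw [dif_pos (show ((0 : Fin (q+1)) : ℕ) = 0 by simp), hmdef, hσdef, hudef]
    have hNk : ∀ k : Fin q, nextLag (q+1) (φ0 i) (φ i) (α0 i) (α i) y x k.succ
        = y k.castSucc := by
      intro k
      rw [nextLag]
      rw [dif_neg (by simp : ¬ ((k.succ : Fin (q+1)) : ℕ) = 0)]
      congr 1
    rw [hN0]
    have hsum2 : ∑ k : Fin q, (fun kk => γ' kk.1) k.succ
        * |nextLag (q+1) (φ0 i) (φ i) (α0 i) (α i) y x k.succ| ^ r
        = ∑ k : Fin q, γ' (k.1 + 1) * |y k.castSucc| ^ r := by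
      refine Finset.sum_congr rfl fun k _ => ?_
      rw [hNk k]
      rfl
    rw [hsum2]
    simp only [Fin.val_zero]
    ring
  have hintegral : ∫ x, testV (q+1) (fun k => γ' k.1) r
      (nextLag (q+1) (φ0 i) (φ i) (α0 i) (α i) y x) ∂μ
      = (1 + ∑ k : Fin q, γ' (k.1 + 1) * |y k.castSucc| ^ r)
        + γ' 0 * ∫ x, |m + x * σ| ^ r ∂μ := by
    simp only [hfun]
    rw [integral_add (integrable_const _) (hintZ.const_mul _), integral_const,
      integral_const_mul]
    simp [measure_univ]
  -- bound |m|^r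
  set B := ∑ j, bb j * |y j| with hBdef
  have hB0' : 0 ≤ B := Finset.sum_nonneg fun j _ => mul_nonneg (hbb0 j) (abs_nonneg _)
  have hmabs : |m| ≤ A0 + B := by
    rw [hmdef, hBdef]
    calc |φ0 i + ∑ j, φ i j * y j| ≤ |φ0 i| + |∑ j, φ i j * y j| := abs_add_le _ _
    _ ≤ A0 + ∑ j, |φ i j * y j| :=
        add_le_add hφ0i (Finset.abs_sum_le_sum_abs _ _)
    _ ≤ A0 + ∑ j, bb j * |y j| := by
        refine add_le_add_right (Finset.sum_le_sum fun j _ => ?_) A0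
        rw [abs_mul]
        exact mul_le_mul_of_nonneg_right (hφi j) (abs_nonneg _)
  have hm1 : |m| ^ r ≤ (A0 + B) ^ r :=
    Real.rpow_le_rpow (abs_nonneg m) hmabs hr0
  have hm2 : (A0 + B) ^ r ≤ ((1 + ε) * B) ^ r + ((1 + 1/ε) * A0) ^ r :=
    aux_split hr0 hε0 hA00 hB0'
  have hm3 : ((1 + ε) * B) ^ r = (1 + ε) ^ r * B ^ r :=
    Real.mul_rpow (by linarith) hB0'
  have hm4 : B ^ r ≤ Sb ^ (r - 1) * ∑ j, bb j * |y j| ^ r := by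
    rw [hBdef, hSbdef]
    exact aux_jensen bb (fun j => |y j|) hbb0 (fun j => abs_nonneg _) hr1.le
  have hm5 : |m| ^ r ≤ ((1 + 1/ε) * A0) ^ r
      + (1 + ε) ^ r * Sb ^ (r - 1) * ∑ j, bb j * |y j| ^ r := by
    have h := mul_le_mul_of_nonneg_left hm4 (Real.rpow_nonneg (by linarith : (0:ℝ) ≤ 1 + ε) r)
    rw [hm3] at hm2
    calc |m| ^ r ≤ (A0 + B) ^ r := hm1
    _ ≤ (1 + ε) ^ r * B ^ r + ((1 + 1/ε) * A0) ^ r := hm2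
    _ ≤ (1 + ε) ^ r * (Sb ^ (r - 1) * ∑ j, bb j * |y j| ^ r) + ((1 + 1/ε) * A0) ^ r := by
        linarith
    _ = ((1 + 1/ε) * A0) ^ r + (1 + ε) ^ r * Sb ^ (r - 1) * ∑ j, bb j * |y j| ^ r := by
        ring
  -- bound σ^r
  have hσr : σ ^ r = u ^ (r/2) := by
    rw [hσdef, Real.sqrt_eq_rpow, ← Real.rpow_mul hu0]
    congr 1
    ring
  have hu_le : u ≤ B0 + ∑ j, aa j * y j ^ 2 := by
    rw [hudef]
    exact add_le_add hα0i (Finset.sum_le_sum fun j _ =>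
      mul_le_mul_of_nonneg_right (hαi j) (sq_nonneg _))
  have hS2 : 0 ≤ ∑ j, aa j * y j ^ 2 :=
    Finset.sum_nonneg fun j _ => mul_nonneg (haa0 j) (sq_nonneg _)
  have hσ1 : σ ^ r ≤ B0 ^ (r/2) + ∑ j, (aa j) ^ (r/2) * |y j| ^ r := by
    rw [hσr]
    calc u ^ (r/2) ≤ (B0 + ∑ j, aa j * y j ^ 2) ^ (r/2) :=
        Real.rpow_le_rpow hu0 hu_le hs0.le
    _ ≤ B0 ^ (r/2) + (∑ j, aa j * y j ^ 2) ^ (r/2) :=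
        aux_rpow_subadd hs0 hs1 hB00 hS2
    _ ≤ B0 ^ (r/2) + ∑ j, (aa j * y j ^ 2) ^ (r/2) := by
        refine add_le_add_right (aux_rpow_sum_le _ hs0 hs1 _ fun j _ =>
          mul_nonneg (haa0 j) (sq_nonneg _)) _
    _ = B0 ^ (r/2) + ∑ j, (aa j) ^ (r/2) * |y j| ^ r := by
        refine congrArg _ (Finset.sum_congr rfl fun j _ => ?_)
        rw [Real.mul_rpow (haa0 j) (sq_nonneg _), ← sq_abs (y j),
          ← Real.rpow_natCast_mul (abs_nonneg (y j)) 2 (r/2)]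
        congr 2
        push_cast
        ring
  -- combine into the coefficient bound on the integral
  have hIbound : ∫ x, |m + x * σ| ^ r ∂μ ≤ C0 + ∑ j, dd j * |y j| ^ r := by
    have h1 : σ ^ r * mR ≤ B0 ^ (r/2) * mR
        + ∑ j, (aa j) ^ (r/2) * mR * |y j| ^ r := by
      have h2 := mul_le_mul_of_nonneg_right hσ1 hmR0
      rw [add_mul, Finset.sum_mul] at h2
      refine h2.trans (le_of_eq ?_)
      refine congrArg _ (Finset.sum_congr rfl fun j _ => by ring)
    have h3 : ∑ j, ((1 + ε) ^ r * Sb ^ (r - 1) * (bb j * |y j| ^ r))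
        + ∑ j, (aa j) ^ (r/2) * mR * |y j| ^ r = ∑ j, dd j * |y j| ^ r := by
      rw [← Finset.sum_add_distrib]
      refine Finset.sum_congr rfl fun j _ => ?_
      rw [hdddef]
      ring
    have h4 : (1 + ε) ^ r * Sb ^ (r - 1) * ∑ j, bb j * |y j| ^ r
        = ∑ j, (1 + ε) ^ r * Sb ^ (r - 1) * (bb j * |y j| ^ r) := by
      rw [Finset.mul_sum]
    rw [hC0def]
    calc ∫ x, |m + x * σ| ^ r ∂μ ≤ |m| ^ r + σ ^ r * mR := hI
    _ ≤ ((1 + 1/ε) * A0) ^ r + (1 + ε) ^ r * Sb ^ (r - 1) * (∑ j, bb j * |y j| ^ r)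
        + (B0 ^ (r/2) * mR + ∑ j, (aa j) ^ (r/2) * mR * |y j| ^ r) :=
      add_le_add hm5 h1
    _ = ((1 + 1/ε) * A0) ^ r + B0 ^ (r/2) * mR + ∑ j, dd j * |y j| ^ r := by
        rw [h4, ← h3]
        ring
  -- final assembly
  rw [hintegral, hγ'0, one_mul]
  rw [testV]
  have hY : ∀ j : Fin (q+1), 0 ≤ |y j| ^ r := fun j => Real.rpow_nonneg (abs_nonneg _) r
  have hsplitd : ∑ j : Fin (q+1), dd j * |y j| ^ r
      = ∑ k : Fin q, dd k.castSucc * |y k.castSucc| ^ r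
        + dd (Fin.last q) * |y (Fin.last q)| ^ r :=
    Fin.sum_univ_castSucc _
  have hsplitγ : ∑ j : Fin (q+1), (fun k : Fin (q+1) => γ' k.1) j * |y j| ^ r
      = ∑ k : Fin q, γ' k.1 * |y k.castSucc| ^ r
        + γ' q * |y (Fin.last q)| ^ r := by
    rw [Fin.sum_univ_castSucc]
    rfl
  have hkey : ∑ k : Fin q, γ' (k.1 + 1) * |y k.castSucc| ^ r
      + ∑ k : Fin q, dd k.castSucc * |y k.castSucc| ^ r
      = ρ * ∑ k : Fin q, γ' k.1 * |y k.castSucc| ^ r := by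
    rw [← Finset.sum_add_distrib, Finset.mul_sum]
    refine Finset.sum_congr rfl fun k _ => ?_
    have e1 : γ' (k.1 + 1) = ρ * γ' k.1 - d k.1 := hγ'succ k.1
    have e2 : dd k.castSucc = d k.1 := (hd_eq k.castSucc).symm
    rw [e1, e2]
    ring
  have hlast : dd (Fin.last q) * |y (Fin.last q)| ^ r
      ≤ ρ * (γ' q * |y (Fin.last q)| ^ r) := by
    have e2 : dd (Fin.last q) = d q := (hd_eq (Fin.last q)).symm
    have e3 : γ' (q + 1) = ρ * γ' q - d q := hγ'succ q
    have e4 : t - lam ≤ γ' (q + 1) := hγ'pos (q+1) le_rfl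
    have e5 : d q ≤ ρ * γ' q := by linarith
    rw [e2, ← mul_assoc]
    exact mul_le_mul_of_nonneg_right e5 (hY _)
  rw [hsplitγ]
  have hIb := hIbound
  rw [hsplitd] at hIb
  set S1 := ∑ k : Fin q, γ' (k.1 + 1) * |y k.castSucc| ^ r with hS1def
  set S2 := ∑ k : Fin q, dd k.castSucc * |y k.castSucc| ^ r with hS2def
  set S3 := ∑ k : Fin q, γ' k.1 * |y k.castSucc| ^ r with hS3def
  set LL := dd (Fin.last q) * |y (Fin.last q)| ^ r with hLLdef
  set GG := γ' q * |y (Fin.last q)| ^ r with hGGdef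
  set II := ∫ x, |m + x * σ| ^ r ∂μ with hIIdef
  clear_value S1 S2 S3 LL GG II
  have hexp : ρ * (1 + (S3 + GG)) = ρ + ρ * S3 + ρ * GG := by ring
  linarith [hIb, hkey, hlast, hρ0.le, hexp]


end MainProof
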